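/- (Lower RIP implies error bound along the recovery argument) Let A ∈ ℂ^{m×n}, s > 0, and suppose there are constants 0 < ρ < 1 and τ > 0 such that for every index set S ⊆ {1,...,n} with ∑_{i∈S} u_i² ≤ s and every d ∈ ℂⁿ: ‖d_S‖₂ ≤ (ρ/√s)‖d_{Sᶜ}‖_{1,u} + τ‖A d‖₂ (weighted robust null space property). Let ĉ be a minimizer of ‖d‖_{1,u} subject to ‖y − A d‖₂ ≤ η, and let c be feasible (‖y − A c‖₂ ≤ η). Then for any S with ∑_{i∈S} u_i² ≤ s, ‖c − ĉ‖_{1,u} ≤ (2(1+ρ)/(1−ρ)) ‖c_{Sᶜ}‖_{1,u} + (4τ/(1−ρ)) √s η. -/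

import Mathlib

private lemma l2_tri {m : ℕ} (f g : Fin m → ℂ) :
    Real.sqrt (∑ j, ‖f j - g j‖ ^ 2)
      ≤ Real.sqrt (∑ j, ‖f j‖ ^ 2) + Real.sqrt (∑ j, ‖g j‖ ^ 2) := by
  have h := norm_sub_le ((WithLp.equiv 2 (Fin m → ℂ)).symm f)
    ((WithLp.equiv 2 (Fin m → ℂ)).symm g)
  simpa [EuclideanSpace.norm_eq] using h

/-- Weighted robust null space property implies the weighted `ℓ¹` error bound
for minimizers of weighted `ℓ¹` minimization with feasible ground truth. -/
theorem weighted_nsp_recovery (m n : ℕ) (A : Matrix (Fin m) (Fin n) ℂ)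
    (u : Fin n → ℝ) (hu : ∀ i, 1 ≤ u i)
    (s : ℝ) (hs : 0 < s) (ρ τ : ℝ) (hρ0 : 0 < ρ) (hρ1 : ρ < 1) (hτ : 0 < τ)
    (hNSP : ∀ S : Finset (Fin n), (∑ i ∈ S, (u i) ^ 2) ≤ s →
      ∀ d : Fin n → ℂ,
        Real.sqrt (∑ i ∈ S, ‖d i‖ ^ 2)
          ≤ ρ / Real.sqrt s * (∑ i ∈ Sᶜ, u i * ‖d i‖)
            + τ * Real.sqrt (∑ j, ‖A.mulVec d j‖ ^ 2))
    (y : Fin m → ℂ) (η : ℝ) (hη : 0 ≤ η) (c chat : Fin n → ℂ)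
    (hchatfeas : Real.sqrt (∑ j, ‖y j - A.mulVec chat j‖ ^ 2) ≤ η)
    (hmin : ∀ d : Fin n → ℂ,
      Real.sqrt (∑ j, ‖y j - A.mulVec d j‖ ^ 2) ≤ η →
        (∑ i, u i * ‖chat i‖) ≤ ∑ i, u i * ‖d i‖)
    (hcfeas : Real.sqrt (∑ j, ‖y j - A.mulVec c j‖ ^ 2) ≤ η)
    (S : Finset (Fin n)) (hS : (∑ i ∈ S, (u i) ^ 2) ≤ s) :
    (∑ i, u i * ‖c i - chat i‖)
      ≤ 2 * (1 + ρ) / (1 - ρ) * (∑ i ∈ Sᶜ, u i * ‖c i‖)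
        + 4 * τ / (1 - ρ) * Real.sqrt s * η := by
  set d : Fin n → ℂ := c - chat with hd
  have hdi : ∀ i, d i = c i - chat i := fun i => rfl
  have hsqs : 0 < Real.sqrt s := Real.sqrt_pos.mpr hs
  -- ‖A d‖₂ ≤ 2η
  have hAd : Real.sqrt (∑ j, ‖A.mulVec d j‖ ^ 2) ≤ 2 * η := by
    have heq : ∀ j, ‖A.mulVec d j‖ = ‖(y j - A.mulVec chat j) - (y j - A.mulVec c j)‖ := by
      intro j
      congr 1
      rw [hd, Matrix.mulVec_sub]
      simp
    calc Real.sqrt (∑ j, ‖A.mulVec d j‖ ^ 2)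
        = Real.sqrt (∑ j, ‖(y j - A.mulVec chat j) - (y j - A.mulVec c j)‖ ^ 2) := by
          simp_rw [heq]
      _ ≤ Real.sqrt (∑ j, ‖y j - A.mulVec chat j‖ ^ 2)
            + Real.sqrt (∑ j, ‖y j - A.mulVec c j‖ ^ 2) := l2_tri _ _
      _ ≤ 2 * η := by linarith
  -- Cauchy-Schwarz on S
  have hCS : (∑ i ∈ S, u i * ‖d i‖) ≤ Real.sqrt s * Real.sqrt (∑ i ∈ S, ‖d i‖ ^ 2) := by
    have h1 : (∑ i ∈ S, u i * ‖d i‖) ^ 2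
        ≤ (∑ i ∈ S, (u i) ^ 2) * ∑ i ∈ S, ‖d i‖ ^ 2 :=
      Finset.sum_mul_sq_le_sq_mul_sq S u (fun i => ‖d i‖)
    have hne : 0 ≤ ∑ i ∈ S, ‖d i‖ ^ 2 :=
      Finset.sum_nonneg fun i _ => sq_nonneg _
    have h2 : (∑ i ∈ S, u i * ‖d i‖) ^ 2 ≤ s * ∑ i ∈ S, ‖d i‖ ^ 2 :=
      h1.trans (mul_le_mul_of_nonneg_right hS hne)
    have hnn : 0 ≤ ∑ i ∈ S, u i * ‖d i‖ :=
      Finset.sum_nonneg fun i _ =>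
        mul_nonneg (le_trans zero_le_one (hu i)) (norm_nonneg _)
    calc (∑ i ∈ S, u i * ‖d i‖)
        = Real.sqrt ((∑ i ∈ S, u i * ‖d i‖) ^ 2) := (Real.sqrt_sq hnn).symm
      _ ≤ Real.sqrt (s * ∑ i ∈ S, ‖d i‖ ^ 2) := Real.sqrt_le_sqrt h2
      _ = Real.sqrt s * Real.sqrt (∑ i ∈ S, ‖d i‖ ^ 2) := Real.sqrt_mul hs.le _
  -- NSP applied to d
  have hNd := hNSP S hS d
  set X : ℝ := ∑ i ∈ Sᶜ, u i * ‖d i‖ with hX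
  set C : ℝ := ∑ i ∈ Sᶜ, u i * ‖c i‖ with hC
  have hDS : (∑ i ∈ S, u i * ‖d i‖) ≤ ρ * X + 2 * τ * Real.sqrt s * η := by
    have h3 : (∑ i ∈ S, u i * ‖d i‖)
        ≤ Real.sqrt s * (ρ / Real.sqrt s * X + τ * Real.sqrt (∑ j, ‖A.mulVec d j‖ ^ 2)) :=
      hCS.trans (mul_le_mul_of_nonneg_left hNd hsqs.le)
    have h4 : Real.sqrt s * (ρ / Real.sqrt s) = ρ := by
      field_simp
    have h5 : Real.sqrt s * (τ * Real.sqrt (∑ j, ‖A.mulVec d j‖ ^ 2))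
        ≤ Real.sqrt s * (τ * (2 * η)) := by
      apply mul_le_mul_of_nonneg_left _ hsqs.le
      exact mul_le_mul_of_nonneg_left hAd hτ.le
    rw [mul_add, ← mul_assoc, h4] at h3
    have h6 : Real.sqrt s * (τ * (2 * η)) = 2 * τ * Real.sqrt s * η := by ring
    linarith [h3, h5]
  -- minimality / cone constraint
  have hminc := hmin c hcfeas
  have hsplit : ∀ f : Fin n → ℝ, (∑ i, f i) = (∑ i ∈ S, f i) + ∑ i ∈ Sᶜ, f i := by
    intro f
    rw [Finset.sum_add_sum_compl]
  have hpt1 : ∀ i, u i * ‖c i‖ - u i * ‖d i‖ ≤ u i * ‖chat i‖ := by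
    intro i
    have h := norm_sub_norm_le (c i) (d i)
    have : c i - d i = chat i := by rw [hdi]; ring
    rw [this] at h
    nlinarith [le_trans zero_le_one (hu i), h]
  have hpt2 : ∀ i, u i * ‖d i‖ - u i * ‖c i‖ ≤ u i * ‖chat i‖ := by
    intro i
    have h := norm_sub_norm_le (d i) (c i)
    have : d i - c i = -chat i := by rw [hdi]; ring
    rw [this, norm_neg] at h
    nlinarith [le_trans zero_le_one (hu i), h]
  have hS1 : (∑ i ∈ S, (u i * ‖c i‖ - u i * ‖d i‖)) ≤ ∑ i ∈ S, u i * ‖chat i‖ :=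
    Finset.sum_le_sum fun i _ => hpt1 i
  have hS2 : (∑ i ∈ Sᶜ, (u i * ‖d i‖ - u i * ‖c i‖)) ≤ ∑ i ∈ Sᶜ, u i * ‖chat i‖ :=
    Finset.sum_le_sum fun i _ => hpt2 i
  rw [Finset.sum_sub_distrib] at hS1 hS2
  rw [hsplit (fun i => u i * ‖chat i‖), hsplit (fun i => u i * ‖c i‖)] at hminc
  -- cone: X ≤ ∑_S u‖d‖ + 2C
  have hcone : X ≤ (∑ i ∈ S, u i * ‖d i‖) + 2 * C := by
    simp only [hX, hC] at *
    linarith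
  have hXbound : (1 - ρ) * X ≤ 2 * C + 2 * τ * Real.sqrt s * η := by
    nlinarith [hcone, hDS]
  have hXnn : 0 ≤ X :=
    Finset.sum_nonneg fun i _ =>
      mul_nonneg (le_trans zero_le_one (hu i)) (norm_nonneg _)
  have hCnn : 0 ≤ C :=
    Finset.sum_nonneg fun i _ =>
      mul_nonneg (le_trans zero_le_one (hu i)) (norm_nonneg _)
  have hT : (∑ i, u i * ‖c i - chat i‖) ≤ (1 + ρ) * X + 2 * τ * Real.sqrt s * η := by
    have heq : (∑ i, u i * ‖c i - chat i‖) = ∑ i, u i * ‖d i‖ := by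
      simp [hdi]
    rw [heq, hsplit (fun i => u i * ‖d i‖)]
    linarith [hDS]
  have h1ρ : (0:ℝ) < 1 - ρ := by linarith
  have hkey : (1 - ρ) * (∑ i, u i * ‖c i - chat i‖)
      ≤ 2 * (1 + ρ) * C + 4 * τ * Real.sqrt s * η := by
    nlinarith [hT, hXbound, mul_nonneg (mul_nonneg hτ.le hsqs.le) hη]
  have hgoalform : 2 * (1 + ρ) / (1 - ρ) * C + 4 * τ / (1 - ρ) * Real.sqrt s * η
      = (2 * (1 + ρ) * C + 4 * τ * Real.sqrt s * η) / (1 - ρ) := by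
    field_simp
  rw [hgoalform, le_div_iff₀ h1ρ]
  linarith [hkey]
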